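/- Let f be a continuous function on a convex domain, let P and Q be adjacent regions of the associated arrangement with common facet F, and suppose f = g on P and f = h on Q for affine functions g, h. Then g(x) = h(x) for all x in the affine span of F. -/
import Mathlib


open Finset
open scoped Classical

noncomputable section

/-- Dot product on `Fin d → ℝ`. -/
def dotp {d : ℕ} (a x : Fin d → ℝ) : ℝ := ∑ i, a i * x i

/-- An (affine) linear function `x ↦ a ⬝ x + b`. -/
def IsAffineFn {d : ℕ} (g : (Fin d → ℝ) → ℝ) : Prop :=
  ∃ (a : Fin d → ℝ) (b : ℝ), ∀ x, g x = dotp a x + b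

/-- A closed domain: the closure of a nonempty open set. -/
def IsClosedDomain {d : ℕ} (q : Set (Fin d → ℝ)) : Prop :=
  ∃ U : Set (Fin d → ℝ), IsOpen U ∧ U.Nonempty ∧ q = closure U

/-- `f` is piecewise linear on `Γ`: a finite family of closed domains covers `Γ`
and `f` agrees with an affine function on each of them. -/
def IsPWLOn {d : ℕ} (Γ : Set (Fin d → ℝ)) (f : (Fin d → ℝ) → ℝ) : Prop :=
  ∃ 𝒬 : Finset (Set (Fin d → ℝ)),
    (∀ q ∈ 𝒬, IsClosedDomain q) ∧ (Γ = ⋃ q ∈ 𝒬, (q : Set (Fin d → ℝ))) ∧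
    ∀ q ∈ 𝒬, ∃ g, IsAffineFn g ∧ ∀ x ∈ q, f x = g x

/-- `f` is piecewise linear on `Γ` with all pieces taken from the family `g`. -/
def IsPWLWith {d n : ℕ} (Γ : Set (Fin d → ℝ)) (f : (Fin d → ℝ) → ℝ)
    (g : Fin n → (Fin d → ℝ) → ℝ) : Prop :=
  ∃ 𝒬 : Finset (Set (Fin d → ℝ)),
    (∀ q ∈ 𝒬, IsClosedDomain q) ∧ (Γ = ⋃ q ∈ 𝒬, (q : Set (Fin d → ℝ))) ∧
    ∀ q ∈ 𝒬, ∃ i, ∀ x ∈ q, f x = g i x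

/-- The hyperplane `h` (a pair `(a, b)` encoding `{x | a ⬝ x = b}`) separates `P` and `Q`:
they lie in opposite open halfspaces. -/
def SepH {d : ℕ} (h : (Fin d → ℝ) × ℝ) (P Q : Set (Fin d → ℝ)) : Prop :=
  ((∀ x ∈ P, dotp h.1 x < h.2) ∧ (∀ x ∈ Q, h.2 < dotp h.1 x)) ∨
  ((∀ x ∈ P, h.2 < dotp h.1 x) ∧ (∀ x ∈ Q, dotp h.1 x < h.2))

/-- The separation set `S(P,Q)`: hyperplanes of `H` separating `P` and `Q`. -/
def sepSet {d : ℕ} (H : Finset ((Fin d → ℝ) × ℝ)) (P Q : Set (Fin d → ℝ)) :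
    Finset ((Fin d → ℝ) × ℝ) :=
  H.filter (fun h => SepH h P Q)

/-- The hyperplane encoded by the pair `h = (a, b)`. -/
def hypSet {d : ℕ} (h : (Fin d → ℝ) × ℝ) : Set (Fin d → ℝ) := {x | dotp h.1 x = h.2}

/-- The union of the hyperplanes of the arrangement `H`. -/
def hypUnion {d : ℕ} (H : Finset ((Fin d → ℝ) × ℝ)) : Set (Fin d → ℝ) :=
  ⋃ h ∈ H, hypSet h

/-- The regions determined by a set `C`: the connected components of `C`. -/
def regionsOf {d : ℕ} (C : Set (Fin d → ℝ)) : Set (Set (Fin d → ℝ)) :=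
  {P | ∃ x ∈ C, P = connectedComponentIn C x}

/-- The complement (inside `interior Γ`) of the arrangement associated with the
family of components `g`: points where all the `g i` take pairwise distinct values. -/
def armCompl {d n : ℕ} (Γ : Set (Fin d → ℝ)) (g : Fin n → (Fin d → ℝ) → ℝ) :
    Set (Fin d → ℝ) :=
  {x | x ∈ interior Γ ∧ ∀ i j : Fin n, i ≠ j → g i x ≠ g j x}

lemma dotp_cont {d : ℕ} (a : Fin d → ℝ) : Continuous (dotp a) := by
  unfold dotp
  exact continuous_finset_sum _ fun i _ => (continuous_const.mul (continuous_apply i))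


/-- zero set of an affine functional as an affine subspace -/
def zeroSub {d : ℕ} (a : Fin d → ℝ) (b : ℝ) : AffineSubspace ℝ (Fin d → ℝ) where
  carrier := {x | dotp a x + b = 0}
  smul_vsub_vadd_mem' := by
    intro c x y z hx hy hz
    simp only [Set.mem_setOf_eq] at *
    have key : ∀ u v : Fin d → ℝ, ∀ t : ℝ,
        dotp a (t • (u - v) + z) = t * (dotp a u - dotp a v) + dotp a z := by
      intro u v t
      unfold dotp
      simp only [Pi.add_apply, Pi.smul_apply, Pi.sub_apply, smul_eq_mul, mul_sub,
        Finset.sum_sub_distrib, Finset.mul_sum]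
      rw [← Finset.sum_sub_distrib, ← Finset.sum_add_distrib]
      apply Finset.sum_congr rfl; intro i _; ring
    show dotp a (c • (x - y) + z) + b = 0
    rw [key]
    have hx' : dotp a x = -b := by linarith
    have hy' : dotp a y = -b := by linarith
    have hz' : dotp a z = -b := by linarith
    rw [hx', hy', hz']; ring

lemma dotp_sub {d : ℕ} (a a' x : Fin d → ℝ) :
    dotp (a - a') x = dotp a x - dotp a' x := by
  unfold dotp
  rw [← Finset.sum_sub_distrib]
  apply Finset.sum_congr rfl; intro i _
  simp [Pi.sub_apply, sub_mul]


/-- if a continuous function agrees with affine `g` on a region `P` and with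
affine `h` on an adjacent region `Q`, then `g = h` on the affine span of the common facet
`F = closure P ∩ closure Q`. -/
theorem affine_eq_on_affineSpan_facet {d : ℕ} {P Q : Set (Fin d → ℝ)}
    (hPo : IsOpen P) (hQo : IsOpen Q) {f g h : (Fin d → ℝ) → ℝ}
    (hg : IsAffineFn g) (hh : IsAffineFn h)
    (hf : ContinuousOn f (closure P ∪ closure Q))
    (hfg : ∀ x ∈ P, f x = g x) (hfh : ∀ x ∈ Q, f x = h x) :
    ∀ x ∈ (affineSpan ℝ (closure P ∩ closure Q) : Set (Fin d → ℝ)), g x = h x := by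
  obtain ⟨a1, b1, hg1⟩ := hg
  obtain ⟨a2, b2, hh1⟩ := hh
  have hgc : Continuous g := by
    have : g = fun x => dotp a1 x + b1 := funext hg1
    rw [this]; exact (dotp_cont a1).add continuous_const
  have hhc : Continuous h := by
    have : h = fun x => dotp a2 x + b2 := funext hh1
    rw [this]; exact (dotp_cont a2).add continuous_const
  have hfgc : Set.EqOn f g (closure P) :=
    Set.EqOn.of_subset_closure (fun x hx => hfg x hx)
      (hf.mono Set.subset_union_left) hgc.continuousOn subset_closure subset_rfl
  have hfhc : Set.EqOn f h (closure Q) :=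
    Set.EqOn.of_subset_closure (fun x hx => hfh x hx)
      (hf.mono Set.subset_union_right) hhc.continuousOn subset_closure subset_rfl
  have hsub : closure P ∩ closure Q ⊆ (zeroSub (a1 - a2) (b1 - b2) : Set (Fin d → ℝ)) := by
    intro x ⟨h1, h2⟩
    have : g x = h x := by rw [← hfgc h1, hfhc h2]
    show dotp (a1 - a2) x + (b1 - b2) = 0
    rw [dotp_sub]
    rw [hg1 x, hh1 x] at this
    linarith
  have hle := (affineSpan_le (k := ℝ)).mpr hsub
  intro x hx
  have hx' : x ∈ (zeroSub (a1 - a2) (b1 - b2) : Set (Fin d → ℝ)) := hle hx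
  have : dotp (a1 - a2) x + (b1 - b2) = 0 := hx'
  rw [dotp_sub] at this
  rw [hg1 x, hh1 x]
  linarith
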